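/- If (G,m,w,B) satisfies CD(K,n) with K>0, n>1 and equality σ₂ = nK/(n-1) holds, then |B| = 2, every interior vertex is adjacent to both boundary vertices, the two boundary vertices 1 and 2 satisfy m₁ = m₂ and w_{1x} = w_{2x} for every interior vertex x, Deg(1) = Deg(2) = nK/(n-1), and every interior vertex x has boundary degree Deg_b(x) = (n+2)K/(n-1). -/

import Mathlib

open Finset

variable {V : Type*} [Fintype V] [DecidableEq V]

/-- The weighted graph Laplacian: `Δu(x) = (1/m x) ∑_y (u y - u x) w x y`. -/
noncomputable def glap (m : V → ℝ) (w : V → V → ℝ) (u : V → ℝ) (x : V) : ℝ :=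
  (1 / m x) * ∑ y, (u y - u x) * w x y

/-- The carré du champ operator `Γ(u,v) = (1/2)(Δ(uv) - vΔu - uΔv)`. -/
noncomputable def gGam (m : V → ℝ) (w : V → V → ℝ) (u v : V → ℝ) (x : V) : ℝ :=
  (1 / 2) * (glap m w (fun z => u z * v z) x - v x * glap m w u x - u x * glap m w v x)

/-- The iterated carré du champ `Γ₂(u,v) = (1/2)(ΔΓ(u,v) - Γ(Δu,v) - Γ(u,Δv))`. -/
noncomputable def gGam2 (m : V → ℝ) (w : V → V → ℝ) (u v : V → ℝ) (x : V) : ℝ :=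
  (1 / 2) * (glap m w (gGam m w u v) x - gGam m w (glap m w u) v x - gGam m w u (glap m w v) x)

/-- Vertex inner product `⟨u,v⟩ = ∑_x u x v x m x`. -/
noncomputable def vip (m : V → ℝ) (u v : V → ℝ) : ℝ := ∑ x, u x * v x * m x

/-- Edge (1-form) inner product of differentials:
`⟨du,dv⟩ = ∑_{{x,y}∈E} (u y - u x)(v y - v x) w x y = (1/2)∑_{x,y}`. -/
noncomputable def eip (w : V → V → ℝ) (u v : V → ℝ) : ℝ :=
  (1 / 2) * ∑ x, ∑ y, (u y - u x) * (v y - v x) * w x y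

/-- `(m,w)` is a weighted graph structure: positive vertex measure, symmetric
nonnegative edge weights, no loops. -/
def WeightedGraph (m : V → ℝ) (w : V → V → ℝ) : Prop :=
  (∀ x, 0 < m x) ∧ (∀ x y, w x y = w y x) ∧ (∀ x y, 0 ≤ w x y) ∧ (∀ x, w x x = 0)

/-- The underlying simple graph: `x ∼ y` iff `w x y > 0`. -/
def wgraph (w : V → V → ℝ) : SimpleGraph V := SimpleGraph.fromRel (fun x y => 0 < w x y)

/-- The Bakry-Émery curvature-dimension condition `CD(K,n)`. -/
def CD (m : V → ℝ) (w : V → V → ℝ) (K n : ℝ) : Prop :=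
  ∀ (f : V → ℝ) (x : V), gGam2 m w f f x ≥ (1 / n) * (glap m w f x) ^ 2 + K * gGam m w f f x

/-- `B` is a vertex boundary: nonempty, independent, and every boundary vertex is
adjacent to some interior vertex. -/
def GraphBoundary (w : V → V → ℝ) (B : Finset V) : Prop :=
  B.Nonempty ∧ (∀ x ∈ B, ∀ y ∈ B, w x y = 0) ∧ (∀ x ∈ B, ∃ y, y ∉ B ∧ 0 < w x y)

/-- `σ` is a Steklov eigenvalue: there is `u`, harmonic on the interior, with
boundary restriction nonzero, and `∂u/∂n = σ u` on `B`. -/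
def SteklovEig (m : V → ℝ) (w : V → V → ℝ) (B : Finset V) (σ : ℝ) : Prop :=
  ∃ u : V → ℝ, (∃ x ∈ B, u x ≠ 0) ∧ (∀ x, x ∉ B → glap m w u x = 0) ∧
    (∀ x ∈ B, - glap m w u x = σ * u x)

/-- `μ` is an eigenvalue of `-Δ`. -/
def LapEig (m : V → ℝ) (w : V → V → ℝ) (μ : ℝ) : Prop :=
  ∃ u : V → ℝ, u ≠ 0 ∧ ∀ x, - glap m w u x = μ * u x

/-- The edge weight of the induced graph on the interior `Ω = Bᶜ`. -/
def wRes (B : Finset V) (w : V → V → ℝ) : V → V → ℝ :=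
  fun x y => if x ∈ B ∨ y ∈ B then 0 else w x y


section StmtAux
set_option linter.unusedSectionVars false

variable {m : V → ℝ} {w : V → V → ℝ}

private lemma sum_split (f g : V → ℝ) (z : V) (h : ∀ y, y ≠ z → f y = g y) :
    ∑ y, f y = ∑ y, g y + (f z - g z) := by
  have : ∑ y, (f y - g y) = f z - g z := by
    rw [Finset.sum_eq_single z (fun y _ hy => by rw [h y hy]; ring) (by simp)]
  have h2 : ∑ y, f y - ∑ y, g y = f z - g z := by rw [← Finset.sum_sub_distrib]; exact this
  linarith

private lemma gGam_eq (hmx : m x ≠ 0) (u v : V → ℝ) :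
    gGam m w u v x = (2 * m x)⁻¹ * ∑ y, (u y - u x) * (v y - v x) * w x y := by
  unfold gGam glap
  rw [show ∑ y, (u y - u x) * (v y - v x) * w x y
      = ∑ y, (u y * v y - u x * v x) * w x y - v x * ∑ y, (u y - u x) * w x y
        - u x * ∑ y, (v y - v x) * w x y by
    rw [Finset.mul_sum, Finset.mul_sum, ← Finset.sum_sub_distrib, ← Finset.sum_sub_distrib]
    exact Finset.sum_congr rfl fun y _ => by ring]
  field_simp

private lemma double_swap (hsym : ∀ x y, w x y = w y x) (F : V → V → ℝ) :
    ∑ x, ∑ y, F x y * w x y = ∑ x, ∑ y, F y x * w x y := by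
  rw [Finset.sum_comm]
  exact Finset.sum_congr rfl fun x _ => Finset.sum_congr rfl fun y _ => by rw [hsym y x]

private lemma glap_sum (hm : ∀ x, m x ≠ 0) (hsym : ∀ x y, w x y = w y x) (u : V → ℝ) :
    ∑ x, glap m w u x * m x = 0 := by
  unfold glap
  have h1 : ∀ x : V, 1 / m x * (∑ y, (u y - u x) * w x y) * m x
      = ∑ y, (u y - u x) * w x y := fun x => by rw [one_div, inv_mul_eq_div, div_mul_eq_mul_div, mul_div_assoc, div_self (hm x), mul_one]
  rw [Finset.sum_congr rfl fun x _ => h1 x]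
  have := double_swap hsym (fun x y => u y - u x)
  have h2 : ∑ x, ∑ y, (u x - u y) * w x y = - ∑ x, ∑ y, (u y - u x) * w x y := by
    rw [← Finset.sum_neg_distrib]
    exact Finset.sum_congr rfl fun x _ => by
      rw [← Finset.sum_neg_distrib]
      exact Finset.sum_congr rfl fun y _ => by ring
  linarith


private lemma gGam_comm (hm : ∀ x, m x ≠ 0) (u v : V → ℝ) (x : V) :
    gGam m w u v x = gGam m w v u x := by
  rw [gGam_eq (hm x), gGam_eq (hm x)]
  exact congrArg _ (Finset.sum_congr rfl fun y _ => by ring)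

private lemma gGam_sum (hm : ∀ x, m x ≠ 0) (hsym : ∀ x y, w x y = w y x) (u v : V → ℝ) :
    ∑ x, gGam m w u v x * m x = - ∑ x, u x * glap m w v x * m x := by
  have h1 : ∀ x : V, gGam m w u v x * m x
      = 2⁻¹ * ∑ y, (u y - u x) * (v y - v x) * w x y := by
    intro x
    rw [gGam_eq (hm x), mul_inv]
    rw [show (2:ℝ)⁻¹ * (m x)⁻¹ * (∑ y, (u y - u x) * (v y - v x) * w x y) * m x
      = ((m x)⁻¹ * m x) * (2⁻¹ * ∑ y, (u y - u x) * (v y - v x) * w x y) from by ring,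
      inv_mul_cancel₀ (hm x), one_mul]
  have h2 : ∀ x : V, u x * glap m w v x * m x = ∑ y, u x * ((v y - v x) * w x y) := by
    intro x
    unfold glap
    have : u x * (1 / m x * ∑ y, (v y - v x) * w x y) * m x
        = ((m x)⁻¹ * m x) * (u x * ∑ y, (v y - v x) * w x y) := by rw [one_div]; ring
    rw [this, inv_mul_cancel₀ (hm x), one_mul, Finset.mul_sum]
  rw [Finset.sum_congr rfl fun x _ => h1 x, Finset.sum_congr rfl fun x _ => h2 x,
    ← Finset.mul_sum]
  have key : ∑ x, ∑ y, (u y - u x) * (v y - v x) * w x y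
      = - 2 * ∑ x, ∑ y, u x * ((v y - v x) * w x y) := by
    have hswap := double_swap hsym (fun x y => u y * (v y - v x))
    have expand : ∀ x y : V, (u y - u x) * (v y - v x) * w x y
        = u y * (v y - v x) * w x y - u x * ((v y - v x) * w x y) := fun x y => by ring
    have e2 : ∀ x y : V, u x * (v x - v y) * w x y = - (u x * ((v y - v x) * w x y)) :=
      fun x y => by ring
    calc ∑ x, ∑ y, (u y - u x) * (v y - v x) * w x y
        = ∑ x, ∑ y, (u y * (v y - v x) * w x y) - ∑ x, ∑ y, u x * ((v y - v x) * w x y) := by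
          rw [← Finset.sum_sub_distrib]
          exact Finset.sum_congr rfl fun x _ => by
            rw [← Finset.sum_sub_distrib]
            exact Finset.sum_congr rfl fun y _ => expand x y
      _ = - 2 * ∑ x, ∑ y, u x * ((v y - v x) * w x y) := by
          rw [hswap]
          have : ∑ x, ∑ y, u x * (v x - v y) * w x y
              = - ∑ x, ∑ y, u x * ((v y - v x) * w x y) := by
            rw [← Finset.sum_neg_distrib]
            exact Finset.sum_congr rfl fun x _ => by
              rw [← Finset.sum_neg_distrib]
              exact Finset.sum_congr rfl fun y _ => e2 x y
          rw [this]; ring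
  rw [key]; ring

private lemma glap_selfadj (hm : ∀ x, m x ≠ 0) (hsym : ∀ x y, w x y = w y x) (u v : V → ℝ) :
    ∑ x, u x * glap m w v x * m x = ∑ x, v x * glap m w u x * m x := by
  have h1 := gGam_sum hm hsym u v
  have h2 := gGam_sum hm hsym v u
  have h3 : ∑ x, gGam m w u v x * m x = ∑ x, gGam m w v u x * m x :=
    Finset.sum_congr rfl fun x _ => by rw [gGam_comm hm]
  linarith

private lemma gGam2_sum (hm : ∀ x, m x ≠ 0) (hsym : ∀ x y, w x y = w y x) (u v : V → ℝ) :
    ∑ x, gGam2 m w u v x * m x = ∑ x, glap m w u x * glap m w v x * m x := by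
  unfold gGam2
  have h0 : ∀ x : V, (1/2 : ℝ) * (glap m w (gGam m w u v) x - gGam m w (glap m w u) v x
      - gGam m w u (glap m w v) x) * m x
      = (1/2) * (glap m w (gGam m w u v) x * m x - gGam m w (glap m w u) v x * m x
        - gGam m w u (glap m w v) x * m x) := fun x => by ring
  rw [Finset.sum_congr rfl fun x _ => h0 x, ← Finset.mul_sum]
  have hsplit : ∑ x, (glap m w (gGam m w u v) x * m x - gGam m w (glap m w u) v x * m x
      - gGam m w u (glap m w v) x * m x)
      = ∑ x, glap m w (gGam m w u v) x * m x - ∑ x, gGam m w (glap m w u) v x * m x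
        - ∑ x, gGam m w u (glap m w v) x * m x := by
    rw [← Finset.sum_sub_distrib, ← Finset.sum_sub_distrib]
  rw [hsplit, glap_sum hm hsym, gGam_sum hm hsym]
  have h4 : ∑ x, gGam m w u (glap m w v) x * m x
      = - ∑ x, glap m w v x * glap m w u x * m x := by
    rw [Finset.sum_congr rfl fun x _ => by rw [gGam_comm hm u (glap m w v) x]]
    exact gGam_sum hm hsym _ _
  rw [h4]
  have h5 := glap_selfadj hm hsym (glap m w u) v
  have h6 : ∑ x, glap m w u x * glap m w v x * m x
     = ∑ x, glap m w v x * glap m w u x * m x :=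
    Finset.sum_congr rfl fun x _ => by ring
  have h7 : ∑ x, v x * glap m w (glap m w u) x * m x
     = ∑ x, glap m w (glap m w u) x * v x * m x :=
    Finset.sum_congr rfl fun x _ => by ring
  linarith [h5, h6, h7, glap_selfadj hm hsym v (glap m w u)]

private lemma glap_lin (a b : ℝ) (f g : V → ℝ) (x : V) :
    glap m w (fun y => a * f y + b * g y) x = a * glap m w f x + b * glap m w g x := by
  unfold glap
  rw [show ∑ y, (a * f y + b * g y - (a * f x + b * g x)) * w x y
      = a * ∑ y, (f y - f x) * w x y + b * ∑ y, (g y - g x) * w x y from by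
    rw [Finset.mul_sum, Finset.mul_sum, ← Finset.sum_add_distrib]
    exact Finset.sum_congr rfl fun y _ => by ring]
  ring

private lemma gGam_lin_left (hm : ∀ x, m x ≠ 0) (a b : ℝ) (f g h : V → ℝ) (x : V) :
    gGam m w (fun y => a * f y + b * g y) h x = a * gGam m w f h x + b * gGam m w g h x := by
  rw [gGam_eq (hm x), gGam_eq (hm x), gGam_eq (hm x)]
  rw [show ∑ y, (a * f y + b * g y - (a * f x + b * g x)) * (h y - h x) * w x y
      = a * ∑ y, (f y - f x) * (h y - h x) * w x y
        + b * ∑ y, (g y - g x) * (h y - h x) * w x y from by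
    rw [Finset.mul_sum, Finset.mul_sum, ← Finset.sum_add_distrib]
    exact Finset.sum_congr rfl fun y _ => by ring]
  ring

private lemma gGam_lin_right (hm : ∀ x, m x ≠ 0) (a b : ℝ) (f g h : V → ℝ) (x : V) :
    gGam m w h (fun y => a * f y + b * g y) x = a * gGam m w h f x + b * gGam m w h g x := by
  rw [gGam_comm hm, gGam_lin_left hm, gGam_comm hm f, gGam_comm hm g]

private lemma gGam_smul_left (hm : ∀ x, m x ≠ 0) (a : ℝ) (f h : V → ℝ) (x : V) :
    gGam m w (fun y => a * f y) h x = a * gGam m w f h x := by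
  have := gGam_lin_left (w := w) hm a 0 f f h x
  simp only [zero_mul, add_zero] at this
  exact this

private lemma glap_smul (a : ℝ) (f : V → ℝ) (x : V) :
    glap m w (fun y => a * f y) x = a * glap m w f x := by
  have := glap_lin (m := m) (w := w) a 0 f f x
  simp only [zero_mul, add_zero] at this
  exact this

private lemma gGam2_lin_left (hm : ∀ x, m x ≠ 0) (a b : ℝ) (f g h : V → ℝ) (x : V) :
    gGam2 m w (fun y => a * f y + b * g y) h x
      = a * gGam2 m w f h x + b * gGam2 m w g h x := by
  unfold gGam2
  rw [show gGam m w (fun y => a * f y + b * g y) h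
      = (fun y => a * gGam m w f h y + b * gGam m w g h y) from
    funext fun y => gGam_lin_left hm a b f g h y]
  rw [show glap m w (fun y => a * f y + b * g y)
      = (fun y => a * glap m w f y + b * glap m w g y) from
    funext fun y => glap_lin a b f g y]
  rw [glap_lin, gGam_lin_left hm]
  rw [gGam_lin_left hm a b f g (glap m w h) x]
  ring

private lemma gGam2_comm (hm : ∀ x, m x ≠ 0) (f g : V → ℝ) (x : V) :
    gGam2 m w f g x = gGam2 m w g f x := by
  unfold gGam2
  rw [show gGam m w f g = gGam m w g f from funext fun y => gGam_comm hm f g y,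
    gGam_comm hm (glap m w f) g, gGam_comm hm f (glap m w g)]
  ring

private lemma gGam2_lin_right (hm : ∀ x, m x ≠ 0) (a b : ℝ) (f g h : V → ℝ) (x : V) :
    gGam2 m w h (fun y => a * f y + b * g y) x
      = a * gGam2 m w h f x + b * gGam2 m w h g x := by
  rw [gGam2_comm hm, gGam2_lin_left hm, gGam2_comm hm f, gGam2_comm hm g]

private lemma sum_q (hm : ∀ x, m x ≠ 0) (hsym : ∀ x y, w x y = w y x) (K n : ℝ) (f : V → ℝ) :
    ∑ x, (gGam2 m w f f x - (1/n) * (glap m w f x)^2 - K * gGam m w f f x) * m x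
      = ∑ x, ((1 - 1/n) * (glap m w f x)^2 + K * (f x * glap m w f x)) * m x := by
  have e1 : ∀ x : V, (gGam2 m w f f x - (1/n) * (glap m w f x)^2 - K * gGam m w f f x) * m x
      = gGam2 m w f f x * m x - (1/n) * ((glap m w f x * glap m w f x) * m x)
        - K * (gGam m w f f x * m x) := fun x => by ring
  have e2 : ∀ x : V, ((1 - 1/n) * (glap m w f x)^2 + K * (f x * glap m w f x)) * m x
      = (glap m w f x * glap m w f x) * m x - (1/n) * ((glap m w f x * glap m w f x) * m x)
        - K * (- (f x * glap m w f x * m x)) := fun x => by ring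
  rw [Finset.sum_congr rfl fun x _ => e1 x, Finset.sum_congr rfl fun x _ => e2 x]
  have s1 : ∑ x, (gGam2 m w f f x * m x - (1/n) * ((glap m w f x * glap m w f x) * m x)
        - K * (gGam m w f f x * m x))
      = ∑ x, gGam2 m w f f x * m x - (1/n) * ∑ x, (glap m w f x * glap m w f x) * m x
        - K * ∑ x, gGam m w f f x * m x := by
    rw [Finset.sum_sub_distrib, Finset.sum_sub_distrib, ← Finset.mul_sum, ← Finset.mul_sum]
  have s2 : ∑ x, ((glap m w f x * glap m w f x) * m x
        - (1/n) * ((glap m w f x * glap m w f x) * m x) - K * (- (f x * glap m w f x * m x)))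
      = ∑ x, (glap m w f x * glap m w f x) * m x
        - (1/n) * ∑ x, (glap m w f x * glap m w f x) * m x
        - K * ∑ x, (- (f x * glap m w f x * m x)) := by
    rw [Finset.sum_sub_distrib, Finset.sum_sub_distrib, ← Finset.mul_sum, ← Finset.mul_sum]
  rw [s1, s2, gGam2_sum hm hsym, gGam_sum hm hsym]
  rw [show ∑ x, -(f x * glap m w f x * m x) = - ∑ x, f x * glap m w f x * m x from
    Finset.sum_neg_distrib _]

private lemma q_zero_all (hm : ∀ x, 0 < m x) {K n : ℝ} (hCD : CD m w K n) (f : V → ℝ)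
    (hsum : ∑ x, (gGam2 m w f f x - (1/n) * (glap m w f x)^2 - K * gGam m w f f x) * m x = 0) :
    ∀ x, gGam2 m w f f x = (1/n) * (glap m w f x)^2 + K * gGam m w f f x := by
  have hnn : ∀ x ∈ Finset.univ (α := V),
      0 ≤ (gGam2 m w f f x - (1/n) * (glap m w f x)^2 - K * gGam m w f f x) * m x := by
    intro x _
    have h1 := hCD f x
    have := (hm x).le
    nlinarith [hm x]
  have := (Finset.sum_eq_zero_iff_of_nonneg hnn).mp hsum
  intro x
  have hx := this x (Finset.mem_univ x)
  have hmx := (hm x).ne'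
  have : gGam2 m w f f x - (1/n) * (glap m w f x)^2 - K * gGam m w f f x = 0 := by
    rcases mul_eq_zero.mp hx with h | h
    · exact h
    · exact absurd h hmx
  linarith

private lemma bilin_of_q_zero (hm : ∀ x, 0 < m x) {K n : ℝ} (hCD : CD m w K n) (f : V → ℝ)
    (hq : ∀ x, gGam2 m w f f x = (1/n) * (glap m w f x)^2 + K * gGam m w f f x) :
    ∀ (x : V) (φ : V → ℝ), gGam2 m w f φ x
      = (1/n) * (glap m w f x * glap m w φ x) + K * gGam m w f φ x := by
  intro x φ
  have hm' : ∀ x, m x ≠ 0 := fun x => (hm x).ne'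
  set Bx := gGam2 m w f φ x - (1/n) * (glap m w f x * glap m w φ x) - K * gGam m w f φ x with hBx
  set C := gGam2 m w φ φ x - (1/n) * (glap m w φ x)^2 - K * gGam m w φ φ x with hC
  have hC0 : 0 ≤ C := by have := hCD φ x; simp only [hC]; linarith
  have key : ∀ t : ℝ, 0 ≤ 2 * Bx * t + C * t^2 := by
    intro t
    have hfun : (fun y => f y + t * φ y) = (fun y => 1 * f y + t * φ y) := by
      funext y; ring
    have hcd := hCD (fun y => f y + t * φ y) x
    rw [hfun] at hcd
    rw [gGam2_lin_left hm', gGam2_lin_right hm', gGam2_lin_right hm',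
      gGam_lin_left hm', gGam_lin_right hm', gGam_lin_right hm', glap_lin] at hcd
    have c1 : gGam2 m w φ f x = gGam2 m w f φ x := gGam2_comm hm' φ f x
    have c2 : gGam m w φ f x = gGam m w f φ x := gGam_comm hm' φ f x
    rw [c1, c2] at hcd
    have hqx := hq x
    simp only [hBx, hC]
    nlinarith [hcd, hqx]
  have hC1 : 0 < C + 1 := by linarith
  have hs : 0 < (C + 1)⁻¹ := inv_pos.mpr hC1
  have hCs : C * (C + 1)⁻¹ < 2 := by
    have h1 : C * (C + 1)⁻¹ < 1 := by
      rw [← div_eq_mul_inv, div_lt_one hC1]; linarith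
    linarith
  have hk := key (- Bx * (C + 1)⁻¹)
  have hmul : C * (C + 1)⁻¹ * (C + 1)⁻¹ < 2 * (C + 1)⁻¹ := mul_lt_mul_of_pos_right hCs hs
  have hfin : Bx ^ 2 ≤ 0 := by
    by_contra hpos
    push_neg at hpos
    have h2 : 0 < (2 * (C+1)⁻¹ - C * (C+1)⁻¹ * (C+1)⁻¹) * Bx ^ 2 :=
      mul_pos (by linarith) hpos
    nlinarith [hk, h2]
  have h0 : Bx ^ 2 = 0 := le_antisymm hfin (sq_nonneg Bx)
  have hB0 : Bx = 0 := by
    exact (pow_eq_zero_iff (two_ne_zero)).mp h0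
  simp only [hBx] at hB0
  linarith

private lemma glap_eq_sum (u : V → ℝ) (x : V) :
    glap m w u x = (m x)⁻¹ * ∑ y, (u y - u x) * w x y := by
  unfold glap; rw [one_div]

private lemma glap_delta (hm : ∀ x, m x ≠ 0) (hloop : ∀ x, w x x = 0) (z x : V) :
    glap m w (fun t => if t = z then (1:ℝ) else 0) x
      = if x = z then -(∑ t, w z t) * (m z)⁻¹ else w x z * (m x)⁻¹ := by
  rw [glap_eq_sum]
  by_cases hxz : x = z
  · subst hxz
    rw [if_pos rfl]
    have hpt : ∀ t : V, ((if t = x then (1:ℝ) else 0) - 1) * w x t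
        = (if t = x then w x t else 0) - w x t := by
      intro t; by_cases h : t = x <;> simp [h]
    rw [Finset.sum_congr rfl fun t _ => hpt t, Finset.sum_sub_distrib, Finset.sum_ite_eq']
    simp only [Finset.mem_univ, if_pos, hloop x]
    ring
  · rw [if_neg hxz]
    have hpt : ∀ t : V, ((if t = z then (1:ℝ) else 0) - 0) * w x t
        = (if t = z then w x t else 0) := by
      intro t; by_cases h : t = z <;> simp [h]
    rw [Finset.sum_congr rfl fun t _ => hpt t, Finset.sum_ite_eq']
    simp only [Finset.mem_univ, if_pos]
    rw [if_neg hxz]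
    ring

private lemma gGam_delta (hm : ∀ x, m x ≠ 0) (v : V → ℝ) (σ : ℝ)
    (heig : ∀ x, glap m w v x = -σ * v x) (z y : V) :
    gGam m w v (fun t => if t = z then (1:ℝ) else 0) y
      = if y = z then 2⁻¹ * σ * v z else 2⁻¹ * (v z - v y) * w y z * (m y)⁻¹ := by
  rw [gGam_eq (hm y)]
  by_cases hyz : y = z
  · subst hyz
    rw [if_pos rfl]
    have hpt : ∀ t : V, (v t - v y) * ((if t = y then (1:ℝ) else 0) - 1) * w y t
        = (if t = y then 0 else 0) - ((v t - v y) * w y t - (if t = y then (v t - v y) * w y t else 0)) := by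
      intro t; by_cases h : t = y <;> simp [h] <;> ring
    rw [Finset.sum_congr rfl fun t _ => hpt t, Finset.sum_sub_distrib, Finset.sum_sub_distrib,
      Finset.sum_ite_eq', Finset.sum_ite_eq']
    simp only [Finset.mem_univ, if_pos, Finset.sum_const_zero]
    have hsum : ∑ t, (v t - v y) * w y t = m y * glap m w v y := by
      rw [glap_eq_sum, ← mul_assoc, mul_inv_cancel₀ (hm y), one_mul]
    rw [hsum, heig y, mul_inv]
    have : (v y - v y) * w y y = 0 := by ring
    rw [this]
    field_simp [hm y]
    ring
  · rw [if_neg hyz]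
    have hpt : ∀ t : V, (v t - v y) * ((if t = z then (1:ℝ) else 0) - 0) * w y t
        = (if t = z then (v t - v y) * w y t else 0) := by
      intro t; by_cases h : t = z <;> simp [h]
    rw [Finset.sum_congr rfl fun t _ => hpt t, Finset.sum_ite_eq']
    simp only [Finset.mem_univ, if_pos]
    rw [if_neg hyz, mul_inv]
    ring

private lemma sum_vw_zero (hm : ∀ x, m x ≠ 0) {B : Finset V} {v : V → ℝ} {σ : ℝ}
    (hsupp : ∀ x, x ∉ B → v x = 0) (heig : ∀ x, glap m w v x = -σ * v x)
    {x : V} (hx : x ∉ B) : ∑ y, v y * w x y = 0 := by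
  have h := heig x
  rw [glap_eq_sum, hsupp x hx, mul_zero] at h
  have h2 : ∑ y, (v y - 0) * w x y = 0 := by
    rcases mul_eq_zero.mp h with h' | h'
    · exact absurd h' (inv_ne_zero (hm x))
    · exact h'
  rw [← h2]
  exact Finset.sum_congr rfl fun y _ => by ring

private lemma keyF3 (hm : ∀ x, m x ≠ 0) (hloop : ∀ x, w x x = 0) {B : Finset V} {v : V → ℝ} {σ K n : ℝ}
    (hsupp : ∀ x, x ∉ B → v x = 0) (heig : ∀ x, glap m w v x = -σ * v x)
    {x z : V} (hx : x ∉ B) (hz : z ∉ B)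
    (hb : gGam2 m w v (fun t => if t = z then (1:ℝ) else 0) x
      = 1/n * (glap m w v x * glap m w (fun t => if t = z then (1:ℝ) else 0) x)
        + K * gGam m w v (fun t => if t = z then (1:ℝ) else 0) x) :
    ∑ y, v y * w y z * w x y * (m y)⁻¹ = 0 := by
  have hvx : v x = 0 := hsupp x hx
  have hvz : v z = 0 := hsupp z hz
  have hSc := sum_vw_zero hm hsupp heig hx
  have hGe : ∀ y, gGam m w v (fun t => if t = z then (1:ℝ) else 0) y
      = -2⁻¹ * v y * w y z * (m y)⁻¹ := by
    intro y
    rw [gGam_delta hm v σ heig z y]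
    by_cases hyz : y = z
    · subst hyz; rw [if_pos rfl, hvz]; ring
    · rw [if_neg hyz, hvz]; ring
  have hG0 : gGam m w v (fun t => if t = z then (1:ℝ) else 0) x = 0 := by
    rw [hGe x, hvx]; ring
  have comp1 : glap m w (gGam m w v (fun t => if t = z then (1:ℝ) else 0)) x
      = -2⁻¹ * (∑ y, v y * w y z * w x y * (m y)⁻¹) * (m x)⁻¹ := by
    rw [show gGam m w v (fun t => if t = z then (1:ℝ) else 0)
        = (fun y => -2⁻¹ * v y * w y z * (m y)⁻¹) from funext hGe]
    rw [glap_eq_sum]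
    rw [show ∑ y, (-2⁻¹ * v y * w y z * (m y)⁻¹ - -2⁻¹ * v x * w x z * (m x)⁻¹) * w x y
        = -2⁻¹ * ∑ y, v y * w y z * w x y * (m y)⁻¹ from by
      rw [Finset.mul_sum]
      exact Finset.sum_congr rfl fun y _ => by rw [hvx]; ring]
    ring
  have comp2 : gGam m w (glap m w v) (fun t => if t = z then (1:ℝ) else 0) x = 0 := by
    rw [show glap m w v = (fun y => -σ * v y) from funext heig, gGam_smul_left hm, hG0]
    ring
  have comp3 : gGam m w v (glap m w (fun t => if t = z then (1:ℝ) else 0)) x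
      = 2⁻¹ * (∑ y, v y * w y z * w x y * (m y)⁻¹) * (m x)⁻¹ := by
    rw [gGam_eq (hm x)]
    rw [show glap m w (fun t => if t = z then (1:ℝ) else 0)
        = (fun y => if y = z then -(∑ t, w z t) * (m z)⁻¹ else w y z * (m y)⁻¹) from
      funext fun y => glap_delta hm hloop z y]
    rw [show ∑ y, (v y - v x) * ((if y = z then -(∑ t, w z t) * (m z)⁻¹ else w y z * (m y)⁻¹)
          - (if x = z then -(∑ t, w z t) * (m z)⁻¹ else w x z * (m x)⁻¹)) * w x y
        = ∑ y, (v y * w y z * w x y * (m y)⁻¹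
          - (if x = z then -(∑ t, w z t) * (m z)⁻¹ else w x z * (m x)⁻¹) * (v y * w x y)) from by
      refine Finset.sum_congr rfl fun y _ => ?_
      by_cases hyz : y = z
      · subst hyz; rw [if_pos rfl, hvz, hvx]; ring
      · rw [if_neg hyz, hvx]; ring]
    rw [Finset.sum_sub_distrib, ← Finset.mul_sum, hSc, mul_zero, sub_zero, mul_inv]
    ring
  unfold gGam2 at hb
  rw [comp1, comp2, comp3, hG0, heig x, hvx] at hb
  have hfin : (∑ y, v y * w y z * w x y * (m y)⁻¹) * (m x)⁻¹ = 0 := by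
    linear_combination (-2 : ℝ) * hb
  rcases mul_eq_zero.mp hfin with h | h
  · exact h
  · exact absurd h (inv_ne_zero (hm x))

private lemma hvw_lem {B : Finset V} {v : V → ℝ}
    (hind : ∀ a ∈ B, ∀ b ∈ B, w a b = 0) (hsupp : ∀ x, x ∉ B → v x = 0)
    {x : V} (hx : x ∈ B) : ∀ y, v y * w x y = 0 := by
  intro y
  by_cases hy : y ∈ B
  · rw [hind x hx y hy, mul_zero]
  · rw [hsupp y hy, zero_mul]

private lemma sum_w_boundary (hm : ∀ x, m x ≠ 0) {B : Finset V} {v : V → ℝ} {σ : ℝ}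
    (hind : ∀ a ∈ B, ∀ b ∈ B, w a b = 0) (hsupp : ∀ x, x ∉ B → v x = 0)
    (heig : ∀ x, glap m w v x = -σ * v x)
    {a : V} (ha : a ∈ B) (hva : v a ≠ 0) : ∑ y, w a y = σ * m a := by
  have hvw := hvw_lem hind hsupp ha
  have h := heig a
  rw [glap_eq_sum] at h
  have hsum : ∑ y, (v y - v a) * w a y = - v a * ∑ y, w a y := by
    rw [show ∑ y, (v y - v a) * w a y = ∑ y, (v y * w a y - v a * w a y) from
      Finset.sum_congr rfl fun y _ => by ring, Finset.sum_sub_distrib,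
      Finset.sum_eq_zero fun y _ => hvw y, ← Finset.mul_sum]
    ring
  rw [hsum] at h
  have h3 : m a * ((m a)⁻¹ * (- v a * ∑ y, w a y)) = m a * (-σ * v a) := by rw [h]
  rw [← mul_assoc, mul_inv_cancel₀ (hm a), one_mul] at h3
  have h4 : v a * (∑ y, w a y) = v a * (σ * m a) := by linear_combination (-1 : ℝ) * h3
  exact mul_left_cancel₀ hva h4

private lemma keyF1 (hm : ∀ x, m x ≠ 0) (hloop : ∀ x, w x x = 0) {B : Finset V}
    {v : V → ℝ} {σ K n : ℝ}
    (hind : ∀ a ∈ B, ∀ b ∈ B, w a b = 0) (hsupp : ∀ x, x ∉ B → v x = 0)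
    (heig : ∀ x, glap m w v x = -σ * v x)
    {x z : V} (hx : x ∈ B) (hz : z ∈ B) (hxz : x ≠ z)
    (hb : gGam2 m w v (fun t => if t = z then (1:ℝ) else 0) x
      = 1/n * (glap m w v x * glap m w (fun t => if t = z then (1:ℝ) else 0) x)
        + K * gGam m w v (fun t => if t = z then (1:ℝ) else 0) x) :
    (v x + v z) * ∑ y, w x y * w y z * (m y)⁻¹ = 0 := by
  have hvw := hvw_lem hind hsupp hx
  have hwxz : w x z = 0 := hind x hx z hz
  have hGx : gGam m w v (fun t => if t = z then (1:ℝ) else 0) x = 0 := by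
    rw [gGam_delta hm v σ heig z x, if_neg hxz, hwxz]; ring
  have comp1 : glap m w (gGam m w v (fun t => if t = z then (1:ℝ) else 0)) x
      = (m x)⁻¹ * (2⁻¹ * v z * ∑ y, w x y * w y z * (m y)⁻¹) := by
    rw [glap_eq_sum]
    congr 1
    rw [show ∑ y, (gGam m w v (fun t => if t = z then (1:ℝ) else 0) y
          - gGam m w v (fun t => if t = z then (1:ℝ) else 0) x) * w x y
        = ∑ y, gGam m w v (fun t => if t = z then (1:ℝ) else 0) y * w x y from by
      rw [hGx]; exact Finset.sum_congr rfl fun y _ => by ring]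
    rw [sum_split (fun y => gGam m w v (fun t => if t = z then (1:ℝ) else 0) y * w x y)
      (fun y => 2⁻¹ * v z * (w x y * w y z * (m y)⁻¹)) z
      (fun y hy => by
        show gGam m w v (fun t => if t = z then (1:ℝ) else 0) y * w x y
          = 2⁻¹ * v z * (w x y * w y z * (m y)⁻¹)
        rw [gGam_delta hm v σ heig z y, if_neg hy]
        linear_combination (-2⁻¹ * w y z * (m y)⁻¹) * hvw y)]
    rw [gGam_delta hm v σ heig z z, if_pos rfl, hwxz, ← Finset.mul_sum]
    ring
  have comp2 : gGam m w (glap m w v) (fun t => if t = z then (1:ℝ) else 0) x = 0 := by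
    rw [show glap m w v = (fun y => -σ * v y) from funext heig, gGam_smul_left hm, hGx]
    ring
  have comp3 : gGam m w v (glap m w (fun t => if t = z then (1:ℝ) else 0)) x
      = 2⁻¹ * (m x)⁻¹ * (- v x * ∑ y, w x y * w y z * (m y)⁻¹) := by
    rw [gGam_eq (hm x)]
    rw [show glap m w (fun t => if t = z then (1:ℝ) else 0)
        = (fun y => if y = z then -(∑ t, w z t) * (m z)⁻¹ else w y z * (m y)⁻¹) from
      funext fun y => glap_delta hm hloop z y]
    simp only []
    rw [if_neg hxz]
    rw [sum_split
      (fun y => (v y - v x) * ((if y = z then -(∑ t, w z t) * (m z)⁻¹ else w y z * (m y)⁻¹)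
        - w x z * (m x)⁻¹) * w x y)
      (fun y => - v x * (w x y * w y z * (m y)⁻¹) + (v x * (w x z * (m x)⁻¹)) * w x y) z
      (fun y hy => by
        show (v y - v x) * ((if y = z then -(∑ t, w z t) * (m z)⁻¹ else w y z * (m y)⁻¹)
          - w x z * (m x)⁻¹) * w x y
          = - v x * (w x y * w y z * (m y)⁻¹) + (v x * (w x z * (m x)⁻¹)) * w x y
        rw [if_neg hy]
        linear_combination ((w y z * (m y)⁻¹) - w x z * (m x)⁻¹) * hvw y)]
    rw [if_pos rfl, hwxz, Finset.sum_add_distrib, ← Finset.mul_sum, ← Finset.mul_sum, mul_inv]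
    ring
  unfold gGam2 at hb
  rw [comp1, comp2, comp3, hGx, heig x, glap_delta hm hloop z x, if_neg hxz, hwxz] at hb
  have hfin : ((v x + v z) * ∑ y, w x y * w y z * (m y)⁻¹) * (m x)⁻¹ = 0 := by
    linear_combination (4 : ℝ) * hb
  rcases mul_eq_zero.mp hfin with h | h
  · exact h
  · exact absurd h (inv_ne_zero (hm x))

private lemma keyF2 (hm : ∀ x, m x ≠ 0) (hloop : ∀ x, w x x = 0) {B : Finset V}
    {v : V → ℝ} {σ K n ρ : ℝ}
    (hind : ∀ a ∈ B, ∀ b ∈ B, w a b = 0) (hsupp : ∀ x, x ∉ B → v x = 0)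
    (heig : ∀ x, glap m w v x = -σ * v x)
    (hKn : K * n = σ * (n - 1)) (hρn : ρ * n = σ * (n + 2)) (hn0 : n ≠ 0)
    {x z : V} (hx : x ∈ B) (hz : z ∉ B)
    (hb : n * gGam2 m w v (fun t => if t = z then (1:ℝ) else 0) x
      = glap m w v x * glap m w (fun t => if t = z then (1:ℝ) else 0) x
        + n * (K * gGam m w v (fun t => if t = z then (1:ℝ) else 0) x)) :
    v x * ((∑ y, w x y * w y z * (m y)⁻¹) - w x z * ((∑ t, w z t) * (m z)⁻¹ - ρ)) = 0 := by
  have hvw := hvw_lem hind hsupp hx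
  have hxz : x ≠ z := fun h => hz (h ▸ hx)
  have hvz : v z = 0 := hsupp z hz
  have hGe : ∀ y, gGam m w v (fun t => if t = z then (1:ℝ) else 0) y
      = -2⁻¹ * v y * w y z * (m y)⁻¹ := by
    intro y
    rw [gGam_delta hm v σ heig z y]
    by_cases hyz : y = z
    · subst hyz; rw [if_pos rfl, hvz]; ring
    · rw [if_neg hyz, hvz]; ring
  have comp1 : glap m w (gGam m w v (fun t => if t = z then (1:ℝ) else 0)) x
      = (m x)⁻¹ * (2⁻¹ * v x * w x z * (m x)⁻¹ * ∑ y, w x y) := by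
    rw [show gGam m w v (fun t => if t = z then (1:ℝ) else 0)
        = (fun y => -2⁻¹ * v y * w y z * (m y)⁻¹) from funext hGe]
    rw [glap_eq_sum]
    congr 1
    rw [show ∑ y, (-2⁻¹ * v y * w y z * (m y)⁻¹ - -2⁻¹ * v x * w x z * (m x)⁻¹) * w x y
        = ∑ y, (2⁻¹ * v x * w x z * (m x)⁻¹) * w x y from
      Finset.sum_congr rfl fun y _ => by
        linear_combination (-2⁻¹ * w y z * (m y)⁻¹) * hvw y]
    rw [← Finset.mul_sum]
  have comp2 : gGam m w (glap m w v) (fun t => if t = z then (1:ℝ) else 0) x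
      = -σ * (-2⁻¹ * v x * w x z * (m x)⁻¹) := by
    rw [show glap m w v = (fun y => -σ * v y) from funext heig, gGam_smul_left hm, hGe x]
  have comp3 : gGam m w v (glap m w (fun t => if t = z then (1:ℝ) else 0)) x
      = 2⁻¹ * (m x)⁻¹ * (- v x * (∑ y, w x y * w y z * (m y)⁻¹)
          + v x * (w x z * (m x)⁻¹) * (∑ y, w x y)
          + v x * w x z * ((∑ t, w z t) * (m z)⁻¹)) := by
    rw [gGam_eq (hm x)]
    rw [show glap m w (fun t => if t = z then (1:ℝ) else 0)
        = (fun y => if y = z then -(∑ t, w z t) * (m z)⁻¹ else w y z * (m y)⁻¹) from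
      funext fun y => glap_delta hm hloop z y]
    simp only []
    rw [if_neg hxz]
    rw [sum_split
      (fun y => (v y - v x) * ((if y = z then -(∑ t, w z t) * (m z)⁻¹ else w y z * (m y)⁻¹)
        - w x z * (m x)⁻¹) * w x y)
      (fun y => - v x * (w x y * w y z * (m y)⁻¹) + (v x * (w x z * (m x)⁻¹)) * w x y) z
      (fun y hy => by
        show (v y - v x) * ((if y = z then -(∑ t, w z t) * (m z)⁻¹ else w y z * (m y)⁻¹)
          - w x z * (m x)⁻¹) * w x y
          = - v x * (w x y * w y z * (m y)⁻¹) + (v x * (w x z * (m x)⁻¹)) * w x y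
        rw [if_neg hy]
        linear_combination ((w y z * (m y)⁻¹) - w x z * (m x)⁻¹) * hvw y)]
    rw [if_pos rfl, hvz, hloop z, Finset.sum_add_distrib, ← Finset.mul_sum, ← Finset.mul_sum,
      mul_inv]
    ring
  unfold gGam2 at hb
  rw [comp1, comp2, comp3, hGe x, heig x, glap_delta hm hloop z x, if_neg hxz] at hb
  have hfin : (v x * ((∑ y, w x y * w y z * (m y)⁻¹) - w x z * ((∑ t, w z t) * (m z)⁻¹ - ρ)))
      * ((m x)⁻¹ * n) = 0 := by
    linear_combination (4 : ℝ) * hb + (-2 * v x * w x z * (m x)⁻¹) * hKn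
      + (v x * w x z * (m x)⁻¹) * hρn
  rcases mul_eq_zero.mp hfin with h | h
  · exact h
  · rcases mul_eq_zero.mp h with h' | h'
    · exact absurd h' (inv_ne_zero (hm x))
    · exact absurd h' hn0

private lemma closed_univ (hsym : ∀ x y, w x y = w y x) (hconn : (wgraph w).Connected)
    (S : Set V) (hcl : ∀ a b, 0 < w a b → a ∈ S → b ∈ S) {a : V} (ha : a ∈ S) :
    ∀ x, x ∈ S := by
  intro x
  have hwalk : ∀ {c d : V}, (wgraph w).Walk c d → c ∈ S → d ∈ S := by
    intro c d p
    induction p with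
    | nil => exact id
    | @cons c1 c2 c3 h q ih =>
      intro hu
      apply ih
      have hadj : c1 ≠ c2 ∧ (0 < w c1 c2 ∨ 0 < w c2 c1) := by
        simpa [wgraph, SimpleGraph.fromRel_adj] using h
      rcases hadj.2 with h' | h'
      · exact hcl _ _ h' hu
      · exact hcl _ _ (by rw [hsym]; exact h') hu
  obtain ⟨p⟩ := hconn.preconnected a x
  exact hwalk p ha

end StmtAux

set_option maxHeartbeats 1000000 in
/-- rigidity structure: if `σ₂ = nK/(n-1)` then `|B| = 2`, every
interior vertex is adjacent to both boundary vertices, the boundary vertices have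
equal measure and equal weights to each interior vertex, weighted degree
`nK/(n-1)` at the boundary, and weighted boundary degree `(n+2)K/(n-1)` inside. -/
theorem stmt8 (m : V → ℝ) (w : V → V → ℝ) (B : Finset V) (hW : WeightedGraph m w)
    (hconn : (wgraph w).Connected) (hB : GraphBoundary w B)
    (K n : ℝ) (hK : 0 < K) (hn : 1 < n) (hCD : CD m w K n)
    (hs1 : SteklovEig m w B (n * K / (n - 1)))
    (hs2 : ∀ σ : ℝ, SteklovEig m w B σ → 0 < σ → n * K / (n - 1) ≤ σ) :
    B.card = 2 ∧
    ∃ p q : V, p ≠ q ∧ B = {p, q} ∧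
      (∀ x, x ∉ B → 0 < w p x ∧ 0 < w q x) ∧
      m p = m q ∧
      (∀ x, x ∉ B → w p x = w q x) ∧
      (1 / m p) * ∑ y, w p y = n * K / (n - 1) ∧
      (1 / m q) * ∑ y, w q y = n * K / (n - 1) ∧
      (∀ x, x ∉ B → (1 / m x) * ∑ y ∈ B, w x y = (n + 2) * K / (n - 1)) := by
  obtain ⟨hmpos, hsym, hnn, hloop⟩ := hW
  obtain ⟨hBne, hind, hbnd⟩ := hB
  obtain ⟨u, ⟨a₀, ha₀B, ha₀⟩, hharm, hstek⟩ := hs1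
  have hm : ∀ x, m x ≠ 0 := fun x => (hmpos x).ne'
  have hn1 : (0:ℝ) < n - 1 := by linarith
  have hnpos : (0:ℝ) < n := by linarith
  have hn0 : n ≠ 0 := hnpos.ne'
  set σ : ℝ := n * K / (n - 1) with hσdef
  set ρ : ℝ := (n + 2) * K / (n - 1) with hρdef
  have hσpos : 0 < σ := div_pos (mul_pos hnpos hK) hn1
  have hKn : K * n = σ * (n - 1) := by
    rw [hσdef]; field_simp
  have hρn : ρ * n = σ * (n + 2) := by
    rw [hρdef, hσdef]; field_simp
  set v : V → ℝ := fun x => if x ∈ B then u x else 0 with hvdef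
  have hsupp : ∀ x, x ∉ B → v x = 0 := fun x hx => by simp only [hvdef, if_neg hx]
  have hvmem : ∀ x, x ∈ B → v x = u x := fun x hx => by simp only [hvdef, if_pos hx]
  have hv0 : v a₀ ≠ 0 := by rw [hvmem a₀ ha₀B]; exact ha₀
  have hglapu : ∀ x, glap m w u x = -σ * v x := by
    intro x
    by_cases hx : x ∈ B
    · have := hstek x hx; rw [hvmem x hx]; linarith
    · rw [hharm x hx, hsupp x hx, mul_zero]
  have hc0 : (1 - 1/n) * σ^2 - K * σ = 0 := by
    have h1 : (1 - 1/n) * σ^2 - K * σ = σ * (σ * (n-1) - K * n) / n := by field_simp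
    rw [h1, ← hKn]; ring_nf
  -- pointwise CD equality for u
  have hsum_u : ∑ x, (gGam2 m w u u x - (1/n) * (glap m w u x)^2 - K * gGam m w u u x) * m x
      = 0 := by
    rw [sum_q hm hsym K n u]
    rw [show ∑ x, ((1 - 1/n) * (glap m w u x)^2 + K * (u x * glap m w u x)) * m x
        = ∑ x, (((1 - 1/n) * σ^2 - K * σ) * (v x * v x * m x)) from
      Finset.sum_congr rfl fun x _ => by
        rw [hglapu x]
        by_cases hx : x ∈ B
        · rw [hvmem x hx]; ring
        · rw [hsupp x hx]; ring]
    rw [← Finset.mul_sum, hc0, zero_mul]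
  have hqu := q_zero_all hmpos hCD u hsum_u
  have hbu := bilin_of_q_zero hmpos hCD u hqu
  -- Δ(Δu) = -σ Δu
  have hΔΔ : ∀ y, glap m w (glap m w u) y = -σ * glap m w u y := by
    have hint : ∀ φ : V → ℝ,
        ∑ x, φ x * (((1 - 1/n) * glap m w (glap m w u) x + K * glap m w u x) * m x) = 0 := by
      intro φ
      have h1 : ∑ x, gGam2 m w u φ x * m x
          = ∑ x, ((1/n) * (glap m w u x * glap m w φ x) + K * gGam m w u φ x) * m x :=
        Finset.sum_congr rfl fun x _ => by rw [hbu x φ]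
      rw [gGam2_sum hm hsym] at h1
      have h2 : ∑ x, ((1/n) * (glap m w u x * glap m w φ x) + K * gGam m w u φ x) * m x
          = (1/n) * ∑ x, glap m w u x * glap m w φ x * m x
            + K * ∑ x, gGam m w u φ x * m x := by
        rw [Finset.mul_sum, Finset.mul_sum, ← Finset.sum_add_distrib]
        exact Finset.sum_congr rfl fun x _ => by ring
      have h3 : ∑ x, gGam m w u φ x * m x = - ∑ x, φ x * glap m w u x * m x := by
        rw [Finset.sum_congr rfl fun x _ =>
          congrArg (· * m x) (gGam_comm hm u φ x)]
        exact gGam_sum hm hsym φ u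
      rw [h2, h3] at h1
      have h4 : ∑ x, φ x * glap m w (glap m w u) x * m x
          = ∑ x, glap m w u x * glap m w φ x * m x := glap_selfadj hm hsym φ (glap m w u)
      have h5 : ∑ x, φ x * (((1 - 1/n) * glap m w (glap m w u) x + K * glap m w u x) * m x)
          = (1 - 1/n) * ∑ x, φ x * glap m w (glap m w u) x * m x
            + K * ∑ x, φ x * glap m w u x * m x := by
        rw [Finset.mul_sum, Finset.mul_sum, ← Finset.sum_add_distrib]
        exact Finset.sum_congr rfl fun x _ => by ring
      rw [h5, h4]
      linarith [h1]
    intro y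
    have h5 := hint (fun t => if t = y then 1 else 0)
    rw [Finset.sum_congr rfl (fun x _ =>
      show (if x = y then (1:ℝ) else 0)
          * (((1 - 1/n) * glap m w (glap m w u) x + K * glap m w u x) * m x)
        = (if x = y then ((1 - 1/n) * glap m w (glap m w u) x + K * glap m w u x) * m x else 0)
      from by by_cases h : x = y <;> simp [h]), Finset.sum_ite_eq'] at h5
    simp only [Finset.mem_univ, if_pos] at h5
    have h6 : (1 - 1/n) * glap m w (glap m w u) y + K * glap m w u y = 0 := by
      rcases mul_eq_zero.mp h5 with h | h
      exacts [h, absurd h (hm y)]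
    have e : n * (1 - 1/n) = n - 1 := by field_simp
    have h7 : (n - 1) * glap m w (glap m w u) y = - (K * n) * glap m w u y := by
      linear_combination n * h6 - (glap m w (glap m w u) y) * e
    have h8 : (n - 1) * (glap m w (glap m w u) y + σ * glap m w u y) = 0 := by
      linear_combination h7 - (glap m w u y) * hKn
    rcases mul_eq_zero.mp h8 with h | h
    · exact absurd h hn1.ne'
    · linarith
  -- v is an eigenfunction
  have heig : ∀ x, glap m w v x = -σ * v x := by
    intro x
    have hv : v = fun y => (-(1/σ)) * glap m w u y := funext fun y => by
      rw [hglapu y]; field_simp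
    rw [hv, glap_smul, hΔΔ x]
    ring
  -- pointwise CD equality for v
  have hsum_v : ∑ x, (gGam2 m w v v x - (1/n) * (glap m w v x)^2 - K * gGam m w v v x) * m x
      = 0 := by
    rw [sum_q hm hsym K n v]
    rw [show ∑ x, ((1 - 1/n) * (glap m w v x)^2 + K * (v x * glap m w v x)) * m x
        = ∑ x, (((1 - 1/n) * σ^2 - K * σ) * (v x * v x * m x)) from
      Finset.sum_congr rfl fun x _ => by rw [heig x]; ring]
    rw [← Finset.mul_sum, hc0, zero_mul]
  have hqv := q_zero_all hmpos hCD v hsum_v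
  have hbv := bilin_of_q_zero hmpos hCD v hqv
  -- the structural identities
  have hE1 : ∀ x, x ∉ B → ∑ y, v y * w x y = 0 := fun x hx =>
    sum_vw_zero hm hsupp heig hx
  have hE2 : ∀ a, a ∈ B → v a ≠ 0 → ∑ y, w a y = σ * m a := fun a ha hva =>
    sum_w_boundary hm hind hsupp heig ha hva
  have hE3 : ∀ a b, a ∈ B → b ∈ B → a ≠ b →
      (v a + v b) * ∑ y, w a y * w y b * (m y)⁻¹ = 0 := fun a b ha hb' hab =>
    keyF1 hm hloop hind hsupp heig ha hb' hab (hbv a _)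
  have hE4 : ∀ a z, a ∈ B → z ∉ B →
      v a * ((∑ y, w a y * w y z * (m y)⁻¹) - w a z * ((∑ t, w z t) * (m z)⁻¹ - ρ)) = 0 := by
    intro a z ha hz
    refine keyF2 hm hloop hind hsupp heig hKn hρn hn0 ha hz ?_
    rw [hbv a (fun t => if t = z then (1:ℝ) else 0)]
    field_simp
  have hE5 : ∀ x z, x ∉ B → z ∉ B → ∑ y, v y * w y z * w x y * (m y)⁻¹ = 0 := fun x z hx hz =>
    keyF3 hm hloop hsupp heig hx hz (hbv x _)
  -- positivity of cross sums
  have hterm_pos : ∀ (a b y : V), 0 < w a y → 0 < w y b → 0 < ∑ t, w a t * w t b * (m t)⁻¹ := by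
    intro a b y h1 h2
    have hnn' : ∀ t ∈ Finset.univ (α := V), 0 ≤ w a t * w t b * (m t)⁻¹ := fun t _ =>
      mul_nonneg (mul_nonneg (hnn a t) (hnn t b)) (inv_nonneg.mpr (hmpos t).le)
    have hle := Finset.single_le_sum hnn' (Finset.mem_univ y)
    have hy : 0 < w a y * w y b * (m y)⁻¹ :=
      mul_pos (mul_pos h1 h2) (inv_pos.mpr (hmpos y))
    linarith
  have hvB : ∀ a, v a ≠ 0 → a ∈ B := fun a ha => by
    by_contra h; exact ha (hsupp a h)
  -- opposite values across a common interior neighbour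
  have hopp : ∀ a c y, a ∈ B → c ∈ B → c ≠ a → y ∉ B → 0 < w y a → 0 < w y c →
      v c = - v a := by
    intro a c y haB hcB hca hy hwya hwyc
    have hSig := hterm_pos a c y (by rw [hsym]; exact hwya) hwyc
    have h3 := hE3 a c haB hcB (fun h => hca h.symm)
    have := (mul_eq_zero.mp h3).resolve_right hSig.ne'
    linarith
  -- Good = everything
  have hSuniv : ∀ x, ∃ a, v a ≠ 0 ∧ (x = a ∨ 0 < w x a) := by
    have hcl : ∀ x y, 0 < w x y →
        x ∈ {x : V | ∃ a, v a ≠ 0 ∧ (x = a ∨ 0 < w x a)} →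
        y ∈ {x : V | ∃ a, v a ≠ 0 ∧ (x = a ∨ 0 < w x a)} := by
      intro x y hxy hx
      obtain ⟨a, hva, hcase⟩ := hx
      rcases hcase with rfl | hwxa
      · exact ⟨x, hva, Or.inr (by rw [hsym]; exact hxy)⟩
      · have haB := hvB a hva
        have hxB : x ∉ B := fun hxB => by
          rw [hind x hxB a haB] at hwxa; exact lt_irrefl 0 hwxa
        by_cases hyB : y ∈ B
        · by_cases hya : y = a
          · exact ⟨a, hva, Or.inl hya⟩
          · have hvy := hopp a y x haB hyB hya hxB hwxa hxy
            exact ⟨y, by rw [hvy]; exact neg_ne_zero.mpr hva, Or.inl rfl⟩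
        · have h4 := (mul_eq_zero.mp (hE4 a y haB hyB)).resolve_left hva
          have hSig : 0 < ∑ t, w a t * w t y * (m t)⁻¹ :=
            hterm_pos a y x (by rw [hsym]; exact hwxa) hxy
          have hway : w a y ≠ 0 := by
            intro h0
            rw [h0, zero_mul, sub_zero] at h4
            exact hSig.ne' h4
          exact ⟨a, hva, Or.inr (by
            rw [hsym]; exact lt_of_le_of_ne (hnn a y) (Ne.symm hway))⟩
    exact closed_univ hsym hconn _ hcl ⟨a₀, hv0, Or.inl rfl⟩
  have hallB : ∀ b, b ∈ B → v b ≠ 0 := by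
    intro b hbB
    obtain ⟨a, hva, hc⟩ := hSuniv b
    rcases hc with rfl | hw
    · exact hva
    · exact absurd (hind b hbB a (hvB a hva)) hw.ne'
  -- pair structure at interior vertices
  have hpair : ∀ y, y ∉ B → ∀ a, a ∈ B → 0 < w y a →
      ∃ b, b ∈ B ∧ b ≠ a ∧ 0 < w y b ∧ v b = - v a ∧ w y b = w y a ∧
        (∀ c, c ∈ B → 0 < w y c → c = a ∨ c = b) := by
    intro y hy a haB hwya
    have hva := hallB a haB
    have hex : ∃ b, b ∈ B ∧ b ≠ a ∧ 0 < w y b := by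
      by_contra hno
      push_neg at hno
      have hsum : ∑ c, v c * w y c = v a * w y a := by
        apply Finset.sum_eq_single
        · intro c _ hca
          by_cases hcB : c ∈ B
          · rw [le_antisymm (hno c hcB hca) (hnn y c), mul_zero]
          · rw [hsupp c hcB, zero_mul]
        · intro h; exact absurd (Finset.mem_univ a) h
      rw [hE1 y hy] at hsum
      exact (mul_ne_zero hva hwya.ne') hsum.symm
    obtain ⟨b, hbB, hba, hwyb⟩ := hex
    have hvb : v b = - v a := hopp a b y haB hbB hba hy hwya hwyb
    have huniq : ∀ c, c ∈ B → 0 < w y c → c = a ∨ c = b := by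
      intro c hcB hwyc
      by_cases hca : c = a
      · exact Or.inl hca
      by_cases hcb : c = b
      · exact Or.inr hcb
      exfalso
      have hvc : v c = - v a := hopp a c y haB hcB hca hy hwya hwyc
      have hvc' : v c = - v b := hopp b c y hbB hcB hcb hy hwyb hwyc
      rw [hvb] at hvc'
      rw [hvc'] at hvc
      exact hva (by linarith)
    have hsum2 : ∑ c, v c * w y c = v a * w y a + v b * w y b := by
      rw [← Finset.sum_subset (Finset.subset_univ ({a, b} : Finset V))]
      · rw [Finset.sum_pair (fun h => hba h.symm)]
      · intro c _ hcnot
        simp only [Finset.mem_insert, Finset.mem_singleton] at hcnot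
        push_neg at hcnot
        by_cases hcB : c ∈ B
        · have h0 : ¬ 0 < w y c := fun hp => by
            rcases huniq c hcB hp with h | h
            exacts [hcnot.1 h, hcnot.2 h]
          rw [le_antisymm (not_lt.mp h0) (hnn y c), mul_zero]
        · rw [hsupp c hcB, zero_mul]
    rw [hE1 y hy, hvb] at hsum2
    have hweq2 : w y b = w y a := by
      have h9 : v a * (w y a - w y b) = 0 := by linear_combination - hsum2
      rcases mul_eq_zero.mp h9 with h | h
      · exact absurd h hva
      · linarith
    exact ⟨b, hbB, hba, hwyb, hvb, hweq2, huniq⟩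
  -- proportionality from E5
  have hprop : ∀ y, y ∉ B → ∀ a b, a ∈ B → 0 < w y a → b ≠ a → 0 < w y b →
      v b = - v a → w y b = w y a → (∀ c, c ∈ B → 0 < w y c → c = a ∨ c = b) →
      ∀ z, z ∉ B → w a z * (m a)⁻¹ = w b z * (m b)⁻¹ := by
    intro y hy a b haB hwya hba hwyb hvb hwyba huniq z hz
    have hva := hallB a haB
    have h5 := hE5 y z hy hz
    have hsum : ∑ c, v c * w c z * w y c * (m c)⁻¹
        = v a * w a z * w y a * (m a)⁻¹ + v b * w b z * w y b * (m b)⁻¹ := by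
      rw [← Finset.sum_subset (Finset.subset_univ ({a, b} : Finset V))]
      · rw [Finset.sum_pair (fun h => hba h.symm)]
      · intro c _ hcnot
        simp only [Finset.mem_insert, Finset.mem_singleton] at hcnot
        push_neg at hcnot
        by_cases hcB : c ∈ B
        · have h0 : ¬ 0 < w y c := fun hp => by
            rcases huniq c hcB hp with h | h
            exacts [hcnot.1 h, hcnot.2 h]
          rw [le_antisymm (not_lt.mp h0) (hnn y c)]; ring
        · rw [hsupp c hcB]; ring
    rw [h5, hvb, hwyba] at hsum
    have h9 : (v a * w y a) * (w a z * (m a)⁻¹ - w b z * (m b)⁻¹) = 0 := by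
      linear_combination - hsum
    rcases mul_eq_zero.mp h9 with h | h
    · exact absurd h (mul_ne_zero hva hwya.ne')
    · linarith
  -- partner uniqueness
  have hpartner : ∀ a, a ∈ B → ∀ y1 y2 b1 b2, y1 ∉ B → y2 ∉ B →
      0 < w y1 a → 0 < w y1 b1 → b1 ∈ B → b1 ≠ a → v b1 = - v a → w y1 b1 = w y1 a →
        (∀ c, c ∈ B → 0 < w y1 c → c = a ∨ c = b1) →
      0 < w y2 a → 0 < w y2 b2 → b2 ∈ B → b2 ≠ a → v b2 = - v a → w y2 b2 = w y2 a →
        (∀ c, c ∈ B → 0 < w y2 c → c = a ∨ c = b2) →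
      b1 = b2 := by
    intro a haB y1 y2 b1 b2 hy1 hy2 hw1a hw1b hb1B hb1a hvb1 hwe1 hu1 hw2a hw2b hb2B hb2a
      hvb2 hwe2 hu2
    by_contra hne
    have hp1 := hprop y1 hy1 a b1 haB hw1a hb1a hw1b hvb1 hwe1 hu1
    have hp2 := hprop y2 hy2 a b2 haB hw2a hb2a hw2b hvb2 hwe2 hu2
    obtain ⟨z₀, hz₀B, hwb1z⟩ := hbnd b1 hb1B
    have h1 : 0 < w b1 z₀ * (m b1)⁻¹ := mul_pos hwb1z (inv_pos.mpr (hmpos b1))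
    have heq : w b1 z₀ * (m b1)⁻¹ = w b2 z₀ * (m b2)⁻¹ :=
      (hp1 z₀ hz₀B).symm.trans (hp2 z₀ hz₀B)
    have h2 : 0 < w b2 z₀ := by
      by_contra hle
      push_neg at hle
      rw [le_antisymm hle (hnn b2 z₀), zero_mul] at heq
      exact h1.ne' heq
    have hvv := hopp b1 b2 z₀ hb1B hb2B (fun h => hne h.symm) hz₀B
      (by rw [hsym]; exact hwb1z) (by rw [hsym]; exact h2)
    rw [hvb1, hvb2] at hvv
    exact hallB a haB (by linarith)
  -- the two boundary points
  obtain ⟨y₀, hy₀B, hwy₀⟩ := hbnd a₀ ha₀B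
  have hwy₀' : 0 < w y₀ a₀ := by rw [hsym]; exact hwy₀
  obtain ⟨q, hqB, hqa, hwyq, hvq, hwyqa, huniq₀⟩ := hpair y₀ hy₀B a₀ ha₀B hwy₀'
  set p : V := a₀ with hpdef
  have hpB : p ∈ B := ha₀B
  have hvp : v p ≠ 0 := hv0
  have hpq : p ≠ q := fun h => hqa h.symm
  have hvqval : v q = - v p := hvq
  have hvq0 : v q ≠ 0 := by rw [hvqval]; exact neg_ne_zero.mpr hvp
  -- the class of p, q is everything
  have huniq₀' : ∀ c, c ∈ B → 0 < w y₀ c → c = q ∨ c = p := by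
    intro c hcB hwc
    rcases huniq₀ c hcB hwc with h | h
    exacts [Or.inr h, Or.inl h]
  have hvp' : v p = - v q := by rw [hvqval]; ring
  have hCuniv : ∀ x, x = p ∨ x = q ∨ (x ∉ B ∧ 0 < w x p ∧ 0 < w x q) := by
    have hcl : ∀ x y, 0 < w x y →
        x ∈ {x : V | x = p ∨ x = q ∨ (x ∉ B ∧ 0 < w x p ∧ 0 < w x q)} →
        y ∈ {x : V | x = p ∨ x = q ∨ (x ∉ B ∧ 0 < w x p ∧ 0 < w x q)} := by
      intro x y hxy hx
      rcases hx with rfl | rfl | ⟨hxB, hxp, hxq⟩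
      · have hyB : y ∉ B := fun hyB => by
          rw [hind x hpB y hyB] at hxy; exact lt_irrefl 0 hxy
        have hwyp : 0 < w y x := by rw [hsym]; exact hxy
        obtain ⟨b, hbB, hba, hwyb, hvb, hweqb, huniqy⟩ := hpair y hyB x hpB hwyp
        have hbq : b = q := (hpartner x hpB y₀ y q b hy₀B hyB hwy₀' hwyq hqB hqa hvqval
          hwyqa huniq₀ hwyp hwyb hbB hba hvb hweqb huniqy).symm
        exact Or.inr (Or.inr ⟨hyB, hwyp, hbq ▸ hwyb⟩)
      · have hyB : y ∉ B := fun hyB => by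
          rw [hind x hqB y hyB] at hxy; exact lt_irrefl 0 hxy
        have hwyq' : 0 < w y x := by rw [hsym]; exact hxy
        obtain ⟨b, hbB, hbq', hwyb, hvb, hweqb, huniqy⟩ := hpair y hyB x hqB hwyq'
        have hbp : b = p := (hpartner x hqB y₀ y p b hy₀B hyB hwyq hwy₀' hpB hpq hvp'
          hwyqa.symm huniq₀' hwyq' hwyb hbB hbq' hvb hweqb huniqy).symm
        exact Or.inr (Or.inr ⟨hyB, hbp ▸ hwyb, hwyq'⟩)
      · by_cases hyB : y ∈ B
        · obtain ⟨b, hbB, hbp', hwxb, hvb, hweqb, huniqx⟩ := hpair x hxB p hpB hxp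
          have hbq : b = q := (hpartner p hpB y₀ x q b hy₀B hxB hwy₀' hwyq hqB hqa hvqval
            hwyqa huniq₀ hxp hwxb hbB hbp' hvb hweqb huniqx).symm
          rcases huniqx y hyB hxy with rfl | rfl
          · exact Or.inl rfl
          · exact Or.inr (Or.inl hbq)
        · have hwyp2 : 0 < w p y := by
            have h4 := (mul_eq_zero.mp (hE4 p y hpB hyB)).resolve_left hvp
            have hSig : 0 < ∑ t, w p t * w t y * (m t)⁻¹ :=
              hterm_pos p y x (by rw [hsym]; exact hxp) hxy
            have hne0 : w p y ≠ 0 := fun h0 => by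
              rw [h0, zero_mul, sub_zero] at h4; exact hSig.ne' h4
            exact lt_of_le_of_ne (hnn p y) (Ne.symm hne0)
          have hwyq2 : 0 < w q y := by
            have h4 := (mul_eq_zero.mp (hE4 q y hqB hyB)).resolve_left hvq0
            have hSig : 0 < ∑ t, w q t * w t y * (m t)⁻¹ :=
              hterm_pos q y x (by rw [hsym]; exact hxq) hxy
            have hne0 : w q y ≠ 0 := fun h0 => by
              rw [h0, zero_mul, sub_zero] at h4; exact hSig.ne' h4
            exact lt_of_le_of_ne (hnn q y) (Ne.symm hne0)
          exact Or.inr (Or.inr ⟨hyB, by rw [hsym]; exact hwyp2, by rw [hsym]; exact hwyq2⟩)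
    exact closed_univ hsym hconn _ hcl (Or.inl rfl)
  have hBpq : B = {p, q} := by
    apply Finset.Subset.antisymm
    · intro b hb
      rcases hCuniv b with rfl | rfl | ⟨hbB, _, _⟩
      · exact Finset.mem_insert_self _ _
      · exact Finset.mem_insert_of_mem (Finset.mem_singleton_self _)
      · exact absurd hb hbB
    · intro b hb
      rcases Finset.mem_insert.mp hb with rfl | hb'
      · exact hpB
      · rw [Finset.mem_singleton.mp hb']; exact hqB
  have hintpq : ∀ x, x ∉ B → 0 < w x p ∧ 0 < w x q := by
    intro x hx
    rcases hCuniv x with rfl | rfl | ⟨_, h1, h2⟩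
    · exact absurd hpB hx
    · exact absurd hqB hx
    · exact ⟨h1, h2⟩
  have hweq : ∀ x, x ∉ B → w x p = w x q := by
    intro x hx
    obtain ⟨b, hbB, hba, hwyb, hvb, hwyba, huniq⟩ := hpair x hx p hpB (hintpq x hx).1
    have : b = q := by
      rcases huniq q hqB (hintpq x hx).2 with h | h
      · exact absurd h hpq.symm
      · exact h.symm
    rw [← this, hwyba]
  -- m p = m q
  have hsummv : ∑ x, v x * m x = 0 := by
    have h0 := glap_sum hm hsym v
    have h1 : ∑ x, glap m w v x * m x = -σ * ∑ x, v x * m x := by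
      rw [Finset.mul_sum]
      exact Finset.sum_congr rfl fun x _ => by rw [heig x]; ring
    rw [h1] at h0
    rcases mul_eq_zero.mp h0 with h | h
    · exact absurd h (neg_ne_zero.mpr hσpos.ne')
    · exact h
  have hmpq : m p = m q := by
    have hsum2 : ∑ x, v x * m x = v p * m p + v q * m q := by
      rw [← Finset.sum_subset (Finset.subset_univ ({p, q} : Finset V))]
      · rw [Finset.sum_pair hpq]
      · intro c _ hcnot
        have hcB : c ∉ B := by rw [hBpq]; exact hcnot
        rw [hsupp c hcB, zero_mul]
    rw [hsummv, hvqval] at hsum2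
    have h9 : v p * (m p - m q) = 0 := by linear_combination - hsum2
    rcases mul_eq_zero.mp h9 with h | h
    · exact absurd h hvp
    · linarith
  -- degree at boundary
  have hdegp : ∑ y, w p y = σ * m p := hE2 p hpB hvp
  have hdegq : ∑ y, w q y = σ * m q := hE2 q hqB hvq0
  -- boundary degree of interior vertices
  have hbdeg : ∀ x, x ∉ B → w x p * (m x)⁻¹ * 2 = ρ := by
    have hid : ∀ z, z ∉ B → ∑ y, w p y * w y z * (m y)⁻¹
        = w p z * ((∑ t, w z t) * (m z)⁻¹ - ρ) := by
      intro z hz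
      have h4 := (mul_eq_zero.mp (hE4 p z hpB hz)).resolve_left hvp
      linarith
    have hdB : ∀ t, t ∈ B → w t p * (m t)⁻¹ = 0 := by
      intro t ht; rw [hind t ht p hpB, zero_mul]
    have hdpos : ∀ t, t ∉ B → 0 < w t p * (m t)⁻¹ := fun t ht =>
      mul_pos (hintpq t ht).1 (inv_pos.mpr (hmpos t))
    have hrw : ∀ z, z ∉ B → ∑ y, w p y * w y z * (m y)⁻¹
        = ∑ y, (w y p * (m y)⁻¹) * w z y := by
      intro z hz
      refine Finset.sum_congr rfl fun y _ => ?_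
      rw [hsym p y, hsym y z]; ring
    have hwzp : ∀ z, w p z = (w z p * (m z)⁻¹) * m z := by
      intro z
      rw [hsym p z, mul_assoc, inv_mul_cancel₀ (hm z), mul_one]
    have hid2 : ∀ z, z ∉ B → ∑ y, (w y p * (m y)⁻¹) * w z y
        = (w z p * (m z)⁻¹) * (∑ t, w z t) - ρ * ((w z p * (m z)⁻¹) * m z) := by
      intro z hz
      have h := hid z hz
      rw [hrw z hz, hwzp z] at h
      have hmz : m z * (m z)⁻¹ = 1 := mul_inv_cancel₀ (hm z)
      rw [h]
      linear_combination ((w z p * (m z)⁻¹) * (∑ t, w z t)) * hmz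
    have hsplit : ∀ z, z ∉ B → ∀ c : ℝ,
        ∑ y, (c * w z y - c * (if y = p then w z y else 0) - c * (if y = q then w z y else 0))
          = c * (∑ t, w z t) - 2 * (c * w z p) := by
      intro z hz c
      rw [Finset.sum_sub_distrib, Finset.sum_sub_distrib, ← Finset.mul_sum, ← Finset.mul_sum,
        ← Finset.mul_sum]
      rw [Finset.sum_ite_eq' Finset.univ p (fun y => w z y),
        Finset.sum_ite_eq' Finset.univ q (fun y => w z y)]
      simp only [Finset.mem_univ, if_pos]
      rw [← hweq z hz]
      ring
    have hΩne : (Finset.univ.filter (fun t => t ∉ B)).Nonempty :=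
      ⟨y₀, by simp [hy₀B]⟩
    obtain ⟨zM, hzM', hzMmax⟩ := Finset.exists_max_image _ (fun t => w t p * (m t)⁻¹) hΩne
    obtain ⟨zm, hzm', hzmmin⟩ := Finset.exists_min_image _ (fun t => w t p * (m t)⁻¹) hΩne
    simp only [Finset.mem_filter, Finset.mem_univ, true_and] at hzM' hzm'
    have hup : 2 * (w zM p * (m zM)⁻¹) ≤ ρ := by
      have hpt : ∀ y ∈ Finset.univ (α := V), (w y p * (m y)⁻¹) * w zM y
          ≤ (w zM p * (m zM)⁻¹) * w zM y
            - (w zM p * (m zM)⁻¹) * (if y = p then w zM y else 0)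
            - (w zM p * (m zM)⁻¹) * (if y = q then w zM y else 0) := by
        intro y _
        by_cases hy1 : y = p
        · subst hy1
          rw [if_pos rfl, if_neg hpq, hdB y hpB]
          ring_nf
          exact le_refl _
        · by_cases hy2 : y = q
          · subst hy2
            rw [if_neg (fun h => hpq h.symm), if_pos rfl, hdB y hqB]
            ring_nf
            exact le_refl _
          · have hyB : y ∉ B := by rw [hBpq]; simp [hy1, hy2]
            rw [if_neg hy1, if_neg hy2]
            have hle := hzMmax y (by simp [hyB])
            nlinarith [hnn zM y]
      have hle := Finset.sum_le_sum hpt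
      rw [hsplit zM hzM' (w zM p * (m zM)⁻¹), hid2 zM hzM'] at hle
      have hd := hdpos zM hzM'
      set d : ℝ := w zM p * (m zM)⁻¹ with hddef
      have hw' : w zM p = d * m zM := by
        rw [hddef, mul_assoc, inv_mul_cancel₀ (hm zM), mul_one]
      rw [hw'] at hle
      nlinarith [hle, mul_pos hd (hmpos zM)]
    have hlow : ρ ≤ 2 * (w zm p * (m zm)⁻¹) := by
      have hpt : ∀ y ∈ Finset.univ (α := V),
          (w zm p * (m zm)⁻¹) * w zm y
            - (w zm p * (m zm)⁻¹) * (if y = p then w zm y else 0)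
            - (w zm p * (m zm)⁻¹) * (if y = q then w zm y else 0)
          ≤ (w y p * (m y)⁻¹) * w zm y := by
        intro y _
        by_cases hy1 : y = p
        · subst hy1
          rw [if_pos rfl, if_neg hpq, hdB y hpB]
          ring_nf
          exact le_refl _
        · by_cases hy2 : y = q
          · subst hy2
            rw [if_neg (fun h => hpq h.symm), if_pos rfl, hdB y hqB]
            ring_nf
            exact le_refl _
          · have hyB : y ∉ B := by rw [hBpq]; simp [hy1, hy2]
            rw [if_neg hy1, if_neg hy2]
            have hle := hzmmin y (by simp [hyB])
            nlinarith [hnn zm y]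
      have hle := Finset.sum_le_sum hpt
      rw [hsplit zm hzm' (w zm p * (m zm)⁻¹), hid2 zm hzm'] at hle
      have hd := hdpos zm hzm'
      set d : ℝ := w zm p * (m zm)⁻¹ with hddef
      have hw' : w zm p = d * m zm := by
        rw [hddef, mul_assoc, inv_mul_cancel₀ (hm zm), mul_one]
      rw [hw'] at hle
      nlinarith [hle, mul_pos hd (hmpos zm)]
    intro x hx
    have h1 := hzMmax x (by simp [hx])
    have h2 := hzmmin x (by simp [hx])
    linarith
  have hintpq' : ∀ x, x ∉ B → 0 < w p x ∧ 0 < w q x := fun x hx =>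
    ⟨by rw [hsym]; exact (hintpq x hx).1, by rw [hsym]; exact (hintpq x hx).2⟩
  have hwpx : ∀ x, x ∉ B → w p x = w q x := fun x hx => by
    rw [hsym p x, hsym q x]; exact hweq x hx
  refine ⟨by rw [hBpq]; exact Finset.card_pair hpq, p, q, hpq, hBpq, hintpq', hmpq, hwpx,
    ?_, ?_, ?_⟩
  · rw [hdegp, one_div, mul_comm (m p)⁻¹, mul_assoc, mul_inv_cancel₀ (hm p), mul_one]
  · rw [hdegq, one_div, mul_comm (m q)⁻¹, mul_assoc, mul_inv_cancel₀ (hm q), mul_one]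
  · intro x hx
    rw [hBpq, Finset.sum_pair hpq, ← hweq x hx, one_div]
    linear_combination hbdeg x hx
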